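/- Let n be a positive integer, p ∈ (0,1) and ε ≥ (p(1-p))^(1/(2-p)). Define g : ℝⁿ → ℝ by g(x) = ∑ i, (|x i| + ε)^p. Then for every fixed u ∈ ℝⁿ, the function h(x) = g(x) + (1/2)‖x - u‖² is convex on ℝⁿ. -/

import Mathlib

open Real

private lemma psi_conv_mono (p ε : ℝ) (hp : p ∈ Set.Ioo (0:ℝ) 1) (hε : 0 < ε)
    (hkey : p * (1 - p) ≤ ε ^ (2 - p)) :
    ConvexOn ℝ (Set.Ici 0) (fun s : ℝ => (s + ε) ^ p + s ^ 2 / 2) ∧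
      MonotoneOn (fun s : ℝ => (s + ε) ^ p + s ^ 2 / 2) (Set.Ici 0) := by
  obtain ⟨hp0, hp1⟩ := hp
  have hD : interior (Set.Ici (0:ℝ)) = Set.Ioi 0 := interior_Ici
  -- positivity of s + ε on Ici 0
  have hpos : ∀ s : ℝ, s ∈ Set.Ici (0:ℝ) → 0 < s + ε := fun s hs => by
    simp only [Set.mem_Ici] at hs; linarith
  -- continuity on Ici 0
  have hcont : ContinuousOn (fun s : ℝ => (s + ε) ^ p + s ^ 2 / 2) (Set.Ici 0) := by
    apply ContinuousOn.add
    · exact ((continuous_id.add continuous_const).continuousOn).rpow_const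
        fun s hs => Or.inl (hpos s hs).ne'
    · exact (continuous_pow 2).continuousOn.div_const 2
  -- first derivative
  have hder : ∀ s ∈ interior (Set.Ici (0:ℝ)),
      HasDerivWithinAt (fun s : ℝ => (s + ε) ^ p + s ^ 2 / 2)
        (p * (s + ε) ^ (p - 1) + s) (interior (Set.Ici (0:ℝ))) s := by
    intro s hs
    rw [hD] at hs
    have h0 : 0 < s + ε := by have : (0:ℝ) < s := hs; linarith
    have h1 : HasDerivAt (fun s : ℝ => s + ε) 1 s := (hasDerivAt_id s).add_const ε
    have h2 : HasDerivAt (fun y : ℝ => y ^ p) (p * (s + ε) ^ (p - 1)) (s + ε) :=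
      Real.hasDerivAt_rpow_const (Or.inl h0.ne')
    have h3 : HasDerivAt (fun s : ℝ => (s + ε) ^ p) (p * (s + ε) ^ (p - 1) * 1) s := by
      have := h2.comp s h1; exact this
    have h4 : HasDerivAt (fun s : ℝ => s ^ 2 / 2) ((2 : ℕ) * s ^ 1 / 2) s :=
      (hasDerivAt_pow 2 s).div_const 2
    have := (h3.add h4).hasDerivWithinAt (s := interior (Set.Ici (0:ℝ)))
    refine this.congr_deriv ?_
    push_cast
    ring
  -- second derivative
  have hder2 : ∀ s ∈ interior (Set.Ici (0:ℝ)),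
      HasDerivWithinAt (fun s : ℝ => p * (s + ε) ^ (p - 1) + s)
        (p * ((p - 1) * (s + ε) ^ (p - 2)) + 1) (interior (Set.Ici (0:ℝ))) s := by
    intro s hs
    rw [hD] at hs
    have h0 : 0 < s + ε := by have : (0:ℝ) < s := hs; linarith
    have h1 : HasDerivAt (fun s : ℝ => s + ε) 1 s := (hasDerivAt_id s).add_const ε
    have h2 : HasDerivAt (fun y : ℝ => y ^ (p - 1)) ((p - 1) * (s + ε) ^ (p - 1 - 1)) (s + ε) :=
      Real.hasDerivAt_rpow_const (Or.inl h0.ne')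
    have h3 : HasDerivAt (fun s : ℝ => (s + ε) ^ (p - 1)) ((p - 1) * (s + ε) ^ (p - 1 - 1) * 1) s := by
      have := h2.comp s h1; exact this
    have h4 := (h3.const_mul p).add (hasDerivAt_id s)
    have := h4.hasDerivWithinAt (s := interior (Set.Ici (0:ℝ)))
    refine this.congr_deriv ?_
    ring_nf
  -- second derivative nonneg
  have hnn : ∀ s ∈ interior (Set.Ici (0:ℝ)), 0 ≤ p * ((p - 1) * (s + ε) ^ (p - 2)) + 1 := by
    intro s hs
    rw [hD] at hs
    have hs0 : (0:ℝ) < s := hs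
    have h0 : 0 < s + ε := by linarith
    have hA : 0 < (s + ε) ^ (2 - p) := Real.rpow_pos_of_pos h0 _
    have hle : ε ^ (2 - p) ≤ (s + ε) ^ (2 - p) :=
      Real.rpow_le_rpow hε.le (by linarith) (by linarith)
    have hq : p * (1 - p) ≤ (s + ε) ^ (2 - p) := hkey.trans hle
    have hinv : (s + ε) ^ (p - 2) = ((s + ε) ^ (2 - p))⁻¹ := by
      rw [← Real.rpow_neg h0.le]; norm_num
    rw [hinv]
    have h1 : p * (1 - p) * ((s + ε) ^ (2 - p))⁻¹ ≤ ((s + ε) ^ (2 - p)) * ((s + ε) ^ (2 - p))⁻¹ :=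
      mul_le_mul_of_nonneg_right hq (inv_nonneg.2 hA.le)
    rw [mul_inv_cancel₀ hA.ne'] at h1
    nlinarith [Real.rpow_pos_of_pos h0 (p - 2)]
  constructor
  · exact convexOn_of_hasDerivWithinAt2_nonneg (convex_Ici 0) hcont hder hder2 hnn
  · apply monotoneOn_of_hasDerivWithinAt_nonneg (convex_Ici 0) hcont hder
    intro s hs
    rw [hD] at hs
    have hs0 : (0:ℝ) < s := hs
    have : 0 < s + ε := by linarith
    have := Real.rpow_pos_of_pos this (p - 1)
    positivity

theorem stmt_6 (n : ℕ) (hn : 0 < n) (p ε : ℝ) (hp : p ∈ Set.Ioo (0:ℝ) 1)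
    (hε : (p * (1 - p)) ^ ((1:ℝ) / (2 - p)) ≤ ε)
    (g : EuclideanSpace ℝ (Fin n) → ℝ)
    (hg : ∀ x, g x = ∑ i, (|x i| + ε) ^ p)
    (u : EuclideanSpace ℝ (Fin n)) :
    ConvexOn ℝ Set.univ (fun x => g x + (1 / 2) * ‖x - u‖ ^ 2) := by
  obtain ⟨hp0, hp1⟩ := hp
  have hq : 0 < p * (1 - p) := by nlinarith
  have h2p : (0:ℝ) < 2 - p := by linarith
  have hε0 : 0 < ε := lt_of_lt_of_le (Real.rpow_pos_of_pos hq _) hε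
  have hkey : p * (1 - p) ≤ ε ^ (2 - p) := by
    have := Real.rpow_le_rpow (Real.rpow_nonneg hq.le _) hε h2p.le
    rwa [← Real.rpow_mul hq.le, one_div_mul_cancel h2p.ne',
      Real.rpow_one] at this
    -- note: rpow_natCast may be unnecessary; fix below if needed
  obtain ⟨hconv, hmono⟩ := psi_conv_mono p ε ⟨hp0, hp1⟩ hε0 hkey
  set ψ : ℝ → ℝ := fun s => (s + ε) ^ p + s ^ 2 / 2 with hψ
  -- ψ ∘ |·| is convex on univ
  have himg : (abs : ℝ → ℝ) '' (Set.univ : Set ℝ) = Set.Ici 0 := by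
    ext y
    simp only [Set.image_univ, Set.mem_range, Set.mem_Ici]
    constructor
    · rintro ⟨x, rfl⟩; exact abs_nonneg x
    · intro hy; exact ⟨y, abs_of_nonneg hy⟩
  have habs : ConvexOn ℝ (Set.univ : Set ℝ) (abs : ℝ → ℝ) := by
    have := convexOn_univ_norm (E := ℝ)
    exact this.congr fun x _ => Real.norm_eq_abs x
  have hcomp : ConvexOn ℝ (Set.univ : Set ℝ) (ψ ∘ (abs : ℝ → ℝ)) := by
    apply ConvexOn.comp
    · rw [himg]; exact hconv
    · exact habs
    · rw [himg]; exact hmono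
  -- per coordinate function φ c t = ψ |t| + (-c * t + c^2/2)
  have hlin : ∀ c : ℝ, ConvexOn ℝ (Set.univ : Set ℝ) (fun t => -c * t + c ^ 2 / 2) := by
    intro c
    refine ⟨convex_univ, fun x _ y _ a b ha hb hab => le_of_eq ?_⟩
    simp only [smul_eq_mul]
    linear_combination (-(c ^ 2) / 2) * hab
  have hφ : ∀ c : ℝ, ConvexOn ℝ (Set.univ : Set ℝ)
      (fun t => ψ |t| + (-c * t + c ^ 2 / 2)) := fun c => hcomp.add (hlin c)
  -- the sum is convex
  have hsum : ConvexOn ℝ (Set.univ : Set (EuclideanSpace ℝ (Fin n)))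
      (fun x => ∑ i, (ψ |x i| + (-(u i) * x i + (u i) ^ 2 / 2))) := by
    refine ⟨convex_univ, fun x _ y _ a b ha hb hab => ?_⟩
    simp only [smul_eq_mul]
    rw [Finset.mul_sum, Finset.mul_sum, ← Finset.sum_add_distrib]
    apply Finset.sum_le_sum
    intro i _
    have h := (hφ (u i)).2 (Set.mem_univ (x i)) (Set.mem_univ (y i)) ha hb hab
    simp only [smul_eq_mul] at h
    have happ : (a • x + b • y) i = a * x i + b * y i := by
      simp [PiLp.add_apply, PiLp.smul_apply, smul_eq_mul]
    rw [happ]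
    exact h
  -- identify the objective with the sum
  have heq : (fun x : EuclideanSpace ℝ (Fin n) => g x + (1 / 2) * ‖x - u‖ ^ 2)
      = fun x => ∑ i, (ψ |x i| + (-(u i) * x i + (u i) ^ 2 / 2)) := by
    funext x
    rw [hg x]
    have hnorm : ‖x - u‖ ^ 2 = ∑ i, (x i - u i) ^ 2 := by
      rw [EuclideanSpace.norm_eq]
      rw [Real.sq_sqrt (Finset.sum_nonneg fun i _ => sq_nonneg _)]
      congr 1
      funext i
      rw [Real.norm_eq_abs, sq_abs]
      simp [PiLp.sub_apply]
    rw [hnorm, Finset.mul_sum, ← Finset.sum_add_distrib]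
    apply Finset.sum_congr rfl
    intro i _
    simp only [hψ, sq_abs]
    ring
  rw [heq]
  exact hsum
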